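/- arXiv:math/0009190 — 2 statements merged into one kernel-verified Lean document; each statement's English description precedes it below -/
import Mathlib

section
/- Let P(t,z) = Σ over multi-indices k of (x^k/k!)·t^{a·k}·∏_{i=0}^{b·k−1}(c·k + z + t − i), where each index i has data (aᵢ,bᵢ) ∈ {(0,0),(1,0),(0,1)} and cᵢ ∈ ℝ, in finitely many variables x₁,…,x_n. In the special case where all cᵢ = 0, P factors as P(t,z) = R(t)·S(z,t) with R(t) = exp(Σ_{i: aᵢ=1} xᵢ·t + Σ_{i: aᵢ=bᵢ=0} xᵢ) and S(z,t) = (1 + Σ_{i: bᵢ=1} xᵢ)^{z+t}, and consequently ∂_t² ln P = ∂_z² ln P = ∂_t∂_z ln P = 0. -/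
open Finset


lemma summable_aux (C : ℝ) (hC : 0 < C) (s : ℕ) {r : ℝ} (hr0 : 0 < r) (hr1 : r < 1) :
    Summable (fun m : ℕ => (∏ j ∈ Finset.range (s + m), (C + j)) / m.factorial * r ^ m) := by
  set f : ℕ → ℝ := fun m => (∏ j ∈ Finset.range (s + m), (C + j)) / m.factorial * r ^ m with hf
  have hpos : ∀ m, 0 < f m := by
    intro m
    apply mul_pos (div_pos (Finset.prod_pos fun j _ => by positivity) (by positivity)) (by positivity)
  have hratio : ∀ m : ℕ, f (m + 1) / f m = (C + (s + m)) / (m + 1) * r := by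
    intro m
    have h1 : f (m + 1) = f m * ((C + (s + m)) / (m + 1) * r) := by
      rw [hf]
      simp only
      rw [show s + (m + 1) = (s + m) + 1 by ring, Finset.prod_range_succ, Nat.factorial_succ]
      push_cast
      field_simp
      ring
    rw [h1]
    field_simp [(hpos m).ne']
  apply summable_of_ratio_test_tendsto_lt_one hr1 (Filter.Eventually.of_forall fun m => (hpos m).ne')
  have key : (fun n : ℕ => ‖f (n + 1)‖ / ‖f n‖) = fun n : ℕ => (C + (s + n)) / (n + 1) * r := by
    funext n
    rw [Real.norm_eq_abs, Real.norm_eq_abs, abs_of_pos (hpos _), abs_of_pos (hpos _), hratio n]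
  rw [key]
  have h2 : (fun n : ℕ => (C + (s + n)) / (n + 1) * r) =
      fun n : ℕ => (1 + (C + s - 1) * (1 / (n + 1))) * r := by
    funext n
    have : ((n : ℝ) + 1) ≠ 0 := by positivity
    rw [mul_one_div, div_mul_eq_mul_div, add_div' _ _ _ this, div_mul_eq_mul_div,
      div_eq_div_iff this this]
    ring
  rw [h2]
  have h3 : Filter.Tendsto (fun n : ℕ => (1 + (C + s - 1) * (1 / (n + 1))) * r)
      Filter.atTop (nhds ((1 + (C + s - 1) * 0) * r)) := by
    exact (((tendsto_const_nhds).add ((tendsto_const_nhds).mul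
      tendsto_one_div_add_atTop_nhds_zero_nat)).mul tendsto_const_nhds)
  simpa using h3

lemma genBinomial (w : ℝ) {X : ℝ} (hX : |X| < 1) :
    HasSum (fun M : ℕ => (∏ j ∈ Finset.range M, (w - j)) / M.factorial * X ^ M)
      (Real.exp (w * Real.log (1 + X))) := by
  set c : ℕ → ℝ := fun M => (∏ j ∈ Finset.range M, (w - j)) / M.factorial with hc
  set C : ℝ := |w| + 1 with hC
  set D : ℕ → ℝ := fun M => (∏ j ∈ Finset.range M, (C + j)) / M.factorial with hD
  set ρ : ℝ := (|X| + 1) / 2 with hρ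
  have hρ0 : 0 < ρ := by positivity
  have hρ1 : ρ < 1 := by rw [hρ]; linarith
  have hXρ : |X| < ρ := by rw [hρ]; linarith
  have hcD : ∀ M, |c M| ≤ D M := by
    intro M
    rw [hc, hD]
    simp only [abs_div, Nat.abs_cast]
    apply div_le_div_of_nonneg_right _ (by positivity)
    · rw [abs_prod]
      apply Finset.prod_le_prod (fun j _ => abs_nonneg _)
      intro j _
      calc |w - (j : ℝ)| ≤ |w| + j := by
            calc |w - (j:ℝ)| ≤ |w| + |(j:ℝ)| := abs_sub _ _
            _ = |w| + j := by rw [Nat.abs_cast]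
      _ ≤ C + j := by rw [hC]; linarith
  have hDsum : ∀ {σ : ℝ}, 0 < σ → σ < 1 → Summable (fun M => D M * σ ^ M) := by
    intro σ h0 h1
    have := summable_aux C (by rw [hC]; positivity) 0 h0 h1
    simpa [hD] using this
  -- summability of the series and its derivative series
  have husum : Summable (fun M : ℕ => D M * (M * ρ ^ (M - 1))) := by
    have h1 := summable_aux C (by rw [hC]; positivity) 1 hρ0 hρ1
    rw [← summable_nat_add_iff 1]
    apply h1.congr
    intro m
    rw [hD]
    simp only
    rw [Nat.add_sub_cancel, Nat.factorial_succ, Nat.add_comm 1 m]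
    push_cast
    rw [div_mul_eq_mul_div, div_mul_eq_mul_div, mul_div_assoc, mul_div_assoc,
      mul_div_mul_left _ _ (by positivity : (0:ℝ) < (m:ℝ)+1).ne']
  have hgsum : ∀ {y : ℝ}, |y| ≤ ρ → Summable (fun M : ℕ => c M * y ^ M) := by
    intro y hy
    apply Summable.of_norm_bounded (hDsum hρ0 hρ1)
    intro M
    rw [norm_mul, norm_pow, Real.norm_eq_abs, Real.norm_eq_abs]
    exact mul_le_mul (hcD M) (pow_le_pow_left₀ (abs_nonneg _) hy M) (by positivity)
      ((abs_nonneg _).trans (hcD M))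
  have hgsum' : ∀ {y : ℝ}, |y| ≤ ρ → Summable (fun M : ℕ => c M * (M * y ^ (M - 1))) := by
    intro y hy
    apply Summable.of_norm_bounded husum
    intro M
    rw [norm_mul, norm_mul, norm_pow, Real.norm_eq_abs, Real.norm_eq_abs, Real.norm_eq_abs,
      Nat.abs_cast]
    apply mul_le_mul (hcD M) _ (by positivity) ((abs_nonneg _).trans (hcD M))
    exact mul_le_mul_of_nonneg_left (pow_le_pow_left₀ (abs_nonneg _) hy _) (Nat.cast_nonneg M)
  set t : Set ℝ := Set.Ioo (-ρ) ρ with ht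
  have hmem : ∀ {y : ℝ}, y ∈ t → |y| ≤ ρ := by
    intro y hy
    rw [abs_le]
    exact ⟨(hy.1).le, hy.2.le⟩
  set f : ℝ → ℝ := fun y => ∑' M : ℕ, c M * y ^ M with hf
  set f' : ℝ → ℝ := fun y => ∑' M : ℕ, c M * (M * y ^ (M - 1)) with hf'
  have hderiv : ∀ y ∈ t, HasDerivAt f (f' y) y := by
    intro y hy
    exact hasDerivAt_tsum_of_isPreconnected husum isOpen_Ioo (convex_Ioo _ _).isPreconnected
      (fun M z _ => (hasDerivAt_pow M z).const_mul (c M))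
      (fun M z hz => by
        rw [Real.norm_eq_abs, abs_mul, abs_mul, abs_pow, Nat.abs_cast]
        apply mul_le_mul (hcD M) _ (by positivity) ((abs_nonneg _).trans (hcD M))
        exact mul_le_mul_of_nonneg_left (pow_le_pow_left₀ (abs_nonneg _) (hmem hz) _)
          (Nat.cast_nonneg M))
      (Set.mem_Ioo.mpr ⟨by linarith, hρ0⟩)
      (hgsum (by rw [abs_zero]; exact hρ0.le)) hy
  -- the ODE
  have hODE : ∀ y ∈ t, (1 + y) * f' y = w * f y := by
    intro y hy
    have hyρ := hmem hy
    have hrec : ∀ M : ℕ, c (M + 1) * ((M + 1 : ℕ) * y ^ M) =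
        w * (c M * y ^ M) - y * (c M * (M * y ^ (M - 1))) := by
      intro M
      have h1 : (M + 1 : ℝ) * c (M + 1) = (w - M) * c M := by
        rw [hc]
        simp only [Finset.prod_range_succ, Nat.factorial_succ]
        push_cast
        field_simp
      have h2 : y * (c M * (M * y ^ (M - 1))) = M * (c M * y ^ M) := by
        cases M with
        | zero => simp
        | succ m =>
          simp only [Nat.add_sub_cancel]
          rw [pow_succ]
          push_cast
          ring
      have h3 : c (M + 1) * ((M + 1 : ℕ) * y ^ M) = ((M + 1 : ℝ) * c (M + 1)) * y ^ M := by
        push_cast; ring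
      rw [h3, h1, h2]
      ring
    have hshift : f' y = ∑' M : ℕ, c (M + 1) * ((M + 1 : ℕ) * y ^ M) := by
      show (∑' M : ℕ, c M * (M * y ^ (M - 1))) = _
      rw [(hgsum' hyρ).tsum_eq_zero_add]
      simp only [Nat.cast_zero, zero_mul, mul_zero, zero_add, Nat.add_sub_cancel]
    have hsub : f' y = w * f y - y * f' y := by
      calc f' y = ∑' M : ℕ, c (M + 1) * ((M + 1 : ℕ) * y ^ M) := hshift
        _ = ∑' M : ℕ, (w * (c M * y ^ M) - y * (c M * (M * y ^ (M - 1)))) := by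
            rw [funext hrec]
        _ = w * (∑' M : ℕ, c M * y ^ M) - y * ∑' M : ℕ, c M * (M * y ^ (M - 1)) := by
            rw [((hgsum hyρ).mul_left w).tsum_sub ((hgsum' hyρ).mul_left y), tsum_mul_left,
              tsum_mul_left]
        _ = w * f y - y * f' y := rfl
    linarith [hsub]
  -- the auxiliary function F y = f y * exp(-(w * log (1+y))) has zero derivative on t
  set F : ℝ → ℝ := fun y => f y * Real.exp (-(w * Real.log (1 + y))) with hF
  have h1y : ∀ y ∈ t, (0:ℝ) < 1 + y := by
    intro y hy
    have : -ρ < y := hy.1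
    have : -1 < y := by linarith
    linarith
  have hFderiv : ∀ y ∈ t, HasDerivAt F 0 y := by
    intro y hy
    have h1 : (0:ℝ) < 1 + y := h1y y hy
    have hlog : HasDerivAt (fun z : ℝ => -(w * Real.log (1 + z))) (-(w * (1 / (1 + y)))) y := by
      have : HasDerivAt (fun z : ℝ => 1 + z) 1 y := (hasDerivAt_id y).const_add 1
      have hl := this.log h1.ne'
      exact (hl.const_mul w).neg
    have hexp := hlog.exp
    have hprod := (hderiv y hy).mul hexp
    have : f' y * Real.exp (-(w * Real.log (1 + y))) +
        f y * (Real.exp (-(w * Real.log (1 + y))) * -(w * (1 / (1 + y)))) = 0 := by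
      have e : f' y * Real.exp (-(w * Real.log (1 + y))) +
          f y * (Real.exp (-(w * Real.log (1 + y))) * -(w * (1 / (1 + y)))) =
          Real.exp (-(w * Real.log (1 + y))) / (1 + y) * ((1 + y) * f' y - w * f y) := by
        field_simp
        ring
      rw [e, hODE y hy, sub_self, mul_zero]
    rw [this] at hprod
    exact hprod
  -- F is constant on t, and F 0 = 1
  have hf0 : f 0 = 1 := by
    rw [hf]
    simp only
    rw [tsum_eq_single 0 (by
      intro M hM
      rw [zero_pow hM, mul_zero])]
    rw [hc]
    simp
  have hF0 : F 0 = 1 := by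
    rw [hF]
    simp [hf0]
  have h0t : (0:ℝ) ∈ t := Set.mem_Ioo.mpr ⟨by linarith, hρ0⟩
  have hXt : X ∈ t := Set.mem_Ioo.mpr ⟨neg_lt_of_abs_lt hXρ, lt_of_abs_lt hXρ⟩
  have hFX : F X = 1 := by
    have hcont : ∀ u v : ℝ, Set.Icc u v ⊆ t → ContinuousOn F (Set.Icc u v) := by
      intro u v huv
      intro z hz
      exact ((hFderiv z (huv hz)).continuousAt).continuousWithinAt
    rcases le_or_gt 0 X with h | h
    · have hsub : Set.Icc (0:ℝ) X ⊆ t := by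
        intro z hz
        exact Set.mem_Ioo.mpr ⟨by linarith [hz.1], lt_of_le_of_lt hz.2 hXt.2⟩
      have := constant_of_has_deriv_right_zero (hcont 0 X hsub)
        (fun z hz => (hFderiv z (hsub (Set.mem_Icc.mpr ⟨hz.1, hz.2.le⟩))).hasDerivWithinAt)
        X (Set.mem_Icc.mpr ⟨h, le_refl X⟩)
      rw [this, hF0]
    · have hsub : Set.Icc X (0:ℝ) ⊆ t := by
        intro z hz
        exact Set.mem_Ioo.mpr ⟨lt_of_lt_of_le hXt.1 hz.1, by linarith [hz.2, hρ0]⟩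
      have := constant_of_has_deriv_right_zero (hcont X 0 hsub)
        (fun z hz => (hFderiv z (hsub (Set.mem_Icc.mpr ⟨hz.1, hz.2.le⟩))).hasDerivWithinAt)
        0 (Set.mem_Icc.mpr ⟨h.le, le_refl (0:ℝ)⟩)
      rw [hF0] at this
      rw [← this]
  -- conclude
  have hfX : f X = Real.exp (w * Real.log (1 + X)) := by
    have h2 : f X * Real.exp (-(w * Real.log (1 + X))) = 1 := hFX
    have h3 := congrArg (fun z => z * Real.exp (w * Real.log (1 + X))) h2
    simp only [one_mul] at h3
    rw [mul_assoc, ← Real.exp_add, neg_add_cancel, Real.exp_zero, mul_one] at h3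
    exact h3
  have := (hgsum (le_of_lt hXρ)).hasSum
  rw [show (∑' M : ℕ, c M * X ^ M) = f X from rfl, hfX] at this
  exact this


lemma binom_sum (u v : ℝ) (M : ℕ) :
    ∑ p ∈ Finset.HasAntidiagonal.antidiagonal M, u ^ p.1 / p.1.factorial * (v ^ p.2 / p.2.factorial) =
      (u + v) ^ M / M.factorial := by
  rw [add_pow, Finset.Nat.sum_antidiagonal_eq_sum_range_succ_mk, Finset.sum_div]
  apply Finset.sum_congr rfl
  intro i hi
  have h : i ≤ M := Nat.lt_succ_iff.mp (Finset.mem_range.mp hi)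
  have hfact : (M.factorial : ℝ) = (M.choose i) * i.factorial * (M - i).factorial := by
    exact_mod_cast (Nat.choose_mul_factorial_mul_factorial h).symm
  rw [hfact]
  have h1 : (i.factorial : ℝ) ≠ 0 := by positivity
  have h2 : ((M - i).factorial : ℝ) ≠ 0 := by positivity
  have h3 : ((M.choose i : ℕ) : ℝ) ≠ 0 := by
    exact_mod_cast (Nat.choose_pos h).ne'
  field_simp

lemma L0 (F : ℕ → ℝ) {r : ℝ}
    (HF : ∀ s : ℕ, Summable (fun m : ℕ => |F (s + m)| / m.factorial * r ^ m))
    (s : ℕ) {u v : ℝ} (huv : |u| + |v| ≤ r) :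
    HasSum (fun p : ℕ × ℕ =>
        u ^ p.1 / p.1.factorial * (v ^ p.2 / p.2.factorial) * F (s + p.1 + p.2))
      (∑' M : ℕ, F (s + M) * (u + v) ^ M / M.factorial) := by
  have hr0 : 0 ≤ r := le_trans (by positivity) huv
  set f : ℕ × ℕ → ℝ := fun p =>
    u ^ p.1 / p.1.factorial * (v ^ p.2 / p.2.factorial) * F (s + p.1 + p.2) with hfdef
  set e := Finset.HasAntidiagonal.sigmaAntidiagonalEquivProd (A := ℕ) with he
  have he' : ∀ (M : ℕ) (c : Finset.HasAntidiagonal.antidiagonal M), e ⟨M, c⟩ = (c : ℕ × ℕ) := fun _ _ => rfl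
  -- fiberwise: finite sums over antidiagonals
  have hfiber : ∀ M : ℕ, HasSum (fun c : Finset.HasAntidiagonal.antidiagonal M => f (e ⟨M, c⟩))
      (F (s + M) * (u + v) ^ M / M.factorial) := by
    intro M
    have h1 : HasSum (fun c : Finset.HasAntidiagonal.antidiagonal M => f (e ⟨M, c⟩))
        (∑ c : Finset.HasAntidiagonal.antidiagonal M, f (e ⟨M, c⟩)) := hasSum_fintype _
    convert h1 using 1
    simp only [he']
    rw [Finset.sum_coe_sort (Finset.HasAntidiagonal.antidiagonal M) (fun p => f p)]
    have : ∀ p ∈ Finset.HasAntidiagonal.antidiagonal M, f p =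
        u ^ p.1 / p.1.factorial * (v ^ p.2 / p.2.factorial) * F (s + M) := by
      intro p hp
      rw [hfdef]
      simp only
      rw [add_assoc, (Finset.HasAntidiagonal.mem_antidiagonal.mp hp)]
    rw [Finset.sum_congr rfl this, ← Finset.sum_mul, binom_sum]
    ring
  -- summability of |f| over the sigma type, hence summability of f
  have habs : Summable fun q : (Σ M : ℕ, Finset.HasAntidiagonal.antidiagonal M) => |f (e q)| := by
    rw [summable_sigma_of_nonneg (fun q => abs_nonneg _)]
    constructor
    · intro M
      exact Summable.of_finite
    · apply Summable.of_nonneg_of_le (fun M => tsum_nonneg (fun c => abs_nonneg _))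
        (fun M => ?_) (HF s)
      rw [tsum_fintype]
      have hb : ∀ c : Finset.HasAntidiagonal.antidiagonal M, |f (e ⟨M, c⟩)| =
          |u| ^ (c : ℕ × ℕ).1 / (c : ℕ × ℕ).1.factorial *
            (|v| ^ (c : ℕ × ℕ).2 / (c : ℕ × ℕ).2.factorial) * |F (s + M)| := by
        intro c
        have hc := Finset.HasAntidiagonal.mem_antidiagonal.mp c.2
        rw [hfdef, he']
        simp only
        rw [add_assoc, hc, abs_mul, abs_mul, abs_div, abs_div, abs_pow, abs_pow,
          Nat.abs_cast, Nat.abs_cast]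
      rw [Finset.sum_congr rfl (fun c _ => hb c)]
      rw [← Finset.sum_mul, Finset.sum_coe_sort (Finset.HasAntidiagonal.antidiagonal M)
        (fun p : ℕ × ℕ => |u| ^ p.1 / p.1.factorial * (|v| ^ p.2 / p.2.factorial)), binom_sum]
      calc (|u| + |v|) ^ M / M.factorial * |F (s + M)|
          ≤ r ^ M / M.factorial * |F (s + M)| := by
            apply mul_le_mul_of_nonneg_right _ (abs_nonneg _)
            apply div_le_div_of_nonneg_right _ (by positivity)
            exact pow_le_pow_left₀ (by positivity) huv M
        _ = |F (s + M)| / M.factorial * r ^ M := by ring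
  have hsumf : Summable (fun q : (Σ M : ℕ, Finset.HasAntidiagonal.antidiagonal M) => f (e q)) :=
    habs.of_abs
  -- target series summable
  have htarget : Summable (fun M : ℕ => F (s + M) * (u + v) ^ M / M.factorial) := by
    apply Summable.of_norm_bounded (HF s)
    intro M
    rw [Real.norm_eq_abs, abs_div, abs_mul, abs_pow, Nat.abs_cast]
    calc |F (s + M)| * |u + v| ^ M / M.factorial
        = |F (s + M)| / M.factorial * |u + v| ^ M := by ring
      _ ≤ |F (s + M)| / M.factorial * r ^ M := by
          apply mul_le_mul_of_nonneg_left _ (by positivity)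
          exact pow_le_pow_left₀ (abs_nonneg _) (le_trans (abs_add_le u v) huv) M
  -- combine
  rw [← e.hasSum_iff]
  exact HasSum.sigma_of_hasSum htarget.hasSum
    (fun M => by simpa using hfiber M) hsumf

lemma filter_sum_succ {n : ℕ} (w : Fin (n+1) → ℕ) (y : Fin (n+1) → ℝ) (c : ℕ) :
    ∑ i ∈ univ.filter (fun i => w i = c), y i =
      (if w 0 = c then y 0 else 0) +
        ∑ i ∈ univ.filter (fun i : Fin n => w i.succ = c), y i.succ := by
  rw [Finset.sum_filter, Fin.sum_univ_succ, Finset.sum_filter]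


lemma hasSum_realExp (x : ℝ) : HasSum (fun k : ℕ => x ^ k / k.factorial) (Real.exp x) := by
  rw [Real.exp_eq_exp_ℝ]
  exact NormedSpace.expSeries_div_hasSum_exp x

lemma Gsummable (F : ℕ → ℝ) {r : ℝ}
    (HF : ∀ s : ℕ, Summable (fun m : ℕ => |F (s + m)| / m.factorial * r ^ m))
    (σ : ℕ) {v : ℝ} (hv : |v| ≤ r) :
    Summable (fun m : ℕ => F (σ + m) * v ^ m / m.factorial) := by
  apply Summable.of_norm_bounded (HF σ)
  intro m
  rw [Real.norm_eq_abs, abs_div, abs_mul, abs_pow, Nat.abs_cast]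
  calc |F (σ + m)| * |v| ^ m / m.factorial = |F (σ + m)| / m.factorial * |v| ^ m := by ring
    _ ≤ |F (σ + m)| / m.factorial * r ^ m := by
        apply mul_le_mul_of_nonneg_left _ (by positivity)
        exact pow_le_pow_left₀ (abs_nonneg _) hv m

set_option maxHeartbeats 1000000 in
lemma keyM {r : ℝ} : ∀ (n : ℕ) (F : ℕ → ℝ),
    (∀ s : ℕ, Summable (fun m : ℕ => |F (s + m)| / m.factorial * r ^ m)) →
    ∀ (y : Fin n → ℝ) (w : Fin n → ℕ), (∀ i, w i = 0 ∨ w i = 1) →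
      (∑ i ∈ univ.filter (fun i => w i = 1), |y i|) ≤ r → ∀ s : ℕ,
      HasSum (fun k : Fin n → ℕ => (∏ i, (y i ^ k i / (k i).factorial)) * F (s + ∑ i, w i * k i))
        (Real.exp (∑ i ∈ univ.filter (fun i => w i = 0), y i) *
          ∑' m : ℕ, F (s + m) * (∑ i ∈ univ.filter (fun i => w i = 1), y i) ^ m / m.factorial)
  := by
  intro n
  induction n with
  | zero =>
    intro F HF y w hw hY s
    have h1 : ∀ k : Fin 0 → ℕ, k ≠ (fun _ => 0) → False := by
      intro k hk
      exact hk (funext fun i => i.elim0)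
    have h2 : HasSum (fun k : Fin 0 → ℕ =>
        (∏ i, (y i ^ k i / (k i).factorial)) * F (s + ∑ i, w i * k i))
        ((∏ i : Fin 0, (y i ^ (0:ℕ) / (0:ℕ).factorial)) * F (s + ∑ i : Fin 0, w i * 0)) :=
      hasSum_single (f := fun k : Fin 0 → ℕ =>
        (∏ i, (y i ^ k i / (k i).factorial)) * F (s + ∑ i, w i * k i))
        (fun _ => 0) (fun k hk => (h1 k hk).elim)
    simp only [Finset.univ_eq_empty, Finset.prod_empty, Finset.sum_empty, Finset.filter_empty,
      one_mul, add_zero, Real.exp_zero] at h2 ⊢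
    rw [tsum_eq_single 0 (by
      intro m hm
      rw [zero_pow hm, mul_zero, zero_div])]
    simpa using h2
  | succ n IH =>
    intro F HF y w hw hY s
    set Y' : ℝ := ∑ i ∈ univ.filter (fun i : Fin n => w i.succ = 1), y i.succ with hY'def
    set E' : ℝ := Real.exp (∑ i ∈ univ.filter (fun i : Fin n => w i.succ = 0), y i.succ)
      with hE'def
    have hY'r : (∑ i ∈ univ.filter (fun i : Fin n => w i.succ = 1), |y i.succ|) ≤
        (∑ i ∈ univ.filter (fun i : Fin (n+1) => w i = 1), |y i|) := by
      rw [filter_sum_succ w (fun i => |y i|) 1]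
      have : (0:ℝ) ≤ if w 0 = 1 then |y 0| else 0 := by positivity
      linarith
    have habsY' : |Y'| ≤ ∑ i ∈ univ.filter (fun i : Fin n => w i.succ = 1), |y i.succ| :=
      Finset.abs_sum_le_sum_abs _ _
    have hwsucc : ∀ i : Fin n, w i.succ = 0 ∨ w i.succ = 1 := fun i => hw i.succ
    set Yabs' : ℝ := ∑ i ∈ univ.filter (fun i : Fin n => w i.succ = 1), |y i.succ| with hYabs'def
    have hYabs'0 : (0:ℝ) ≤ Yabs' := Finset.sum_nonneg fun i _ => abs_nonneg _
    have hYabs'r : Yabs' ≤ r := le_trans hY'r hY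
    have hY'r' : |Y'| ≤ r := le_trans habsY' hYabs'r
    have HFabs : ∀ s' : ℕ, Summable (fun m : ℕ => |(|F (s' + m)|)| / m.factorial * r ^ m) := by
      intro s'
      simpa [abs_abs] using HF s'
    -- IH instances
    have hIH : ∀ σ : ℕ, HasSum (fun k' : Fin n → ℕ =>
        (∏ i, ((y i.succ) ^ k' i / (k' i).factorial)) * F (σ + ∑ i, w i.succ * k' i))
        (E' * ∑' m : ℕ, F (σ + m) * Y' ^ m / m.factorial) :=
      fun σ => IH F HF (fun i => y i.succ) (fun i => w i.succ) hwsucc (le_trans hY'r hY) σ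
    have hIHabs : ∀ σ : ℕ, HasSum (fun k' : Fin n → ℕ =>
        (∏ i, ((|y i.succ|) ^ k' i / (k' i).factorial)) * |F (σ + ∑ i, w i.succ * k' i)|)
        (Real.exp (∑ i ∈ univ.filter (fun i : Fin n => w i.succ = 0), |y i.succ|) *
          ∑' m : ℕ, |F (σ + m)| * Yabs' ^ m / m.factorial) :=
      fun σ => IH (fun m => |F m|) HFabs (fun i => |y i.succ|) (fun i => w i.succ) hwsucc
        (by simpa [abs_abs] using hYabs'r) σ
    set E'abs : ℝ := Real.exp (∑ i ∈ univ.filter (fun i : Fin n => w i.succ = 0), |y i.succ|)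
      with hE'absdef
    -- the equivalence
    set e : (ℕ × (Fin n → ℕ)) ≃ (Fin (n+1) → ℕ) := Fin.consEquiv (fun _ => ℕ) with he
    have he' : ∀ (p : ℕ × (Fin n → ℕ)), (e p : Fin (n+1) → ℕ) = Fin.cons p.1 p.2 :=
      fun _ => rfl
    set T : (Fin (n+1) → ℕ) → ℝ := fun k =>
      (∏ i, (y i ^ k i / (k i).factorial)) * F (s + ∑ i, w i * k i) with hT
    have hTe : ∀ (k0 : ℕ) (k' : Fin n → ℕ), T (e (k0, k')) =
        (y 0 ^ k0 / k0.factorial) *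
          ((∏ i : Fin n, (y i.succ ^ k' i / (k' i).factorial)) *
            F (s + (w 0 * k0 + ∑ i : Fin n, w i.succ * k' i))) := by
      intro k0 k'
      rw [hT, he']
      simp only [Fin.prod_univ_succ, Fin.sum_univ_succ, Fin.cons_zero, Fin.cons_succ,
        div_eq_mul_inv]
      ring
    have hTabs : ∀ (k0 : ℕ) (k' : Fin n → ℕ), |T (e (k0, k'))| =
        (|y 0| ^ k0 / k0.factorial) *
          ((∏ i : Fin n, ((|y i.succ|) ^ k' i / (k' i).factorial)) *
            |F (s + (w 0 * k0 + ∑ i : Fin n, w i.succ * k' i))|) := by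
      intro k0 k'
      rw [hTe k0 k']
      rw [abs_mul, abs_mul, abs_div, abs_pow, Nat.abs_cast, Finset.abs_prod]
      congr 2
      apply Finset.prod_congr rfl
      intro i _
      rw [abs_div, abs_pow, Nat.abs_cast]
    rcases hw 0 with hw0 | hw0
    · -- case w 0 = 0 : pure product with the exponential series
      have hTe0 : ∀ p : ℕ × (Fin n → ℕ), T (e p) =
          (y 0 ^ p.1 / p.1.factorial) *
            ((∏ i : Fin n, ((y i.succ) ^ p.2 i / (p.2 i).factorial)) *
              F (s + ∑ i : Fin n, w i.succ * p.2 i)) := by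
        intro p
        rw [hTe p.1 p.2, hw0]
        simp
      have hsummable : Summable (fun p : ℕ × (Fin n → ℕ) =>
          (y 0 ^ p.1 / p.1.factorial) *
            ((∏ i : Fin n, ((y i.succ) ^ p.2 i / (p.2 i).factorial)) *
              F (s + ∑ i : Fin n, w i.succ * p.2 i))) := by
        apply summable_mul_of_summable_norm (f := fun k0 : ℕ => y 0 ^ k0 / k0.factorial)
          (g := fun k' : Fin n → ℕ =>
            (∏ i : Fin n, ((y i.succ) ^ k' i / (k' i).factorial)) *
              F (s + ∑ i : Fin n, w i.succ * k' i))
        · apply ((hasSum_realExp (|y 0|)).summable).congr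
          intro k0
          rw [Real.norm_eq_abs, abs_div, abs_pow, Nat.abs_cast]
        · apply ((hIHabs s).summable).congr
          intro k'
          rw [Real.norm_eq_abs, abs_mul, Finset.abs_prod]
          congr 1
          apply Finset.prod_congr rfl
          intro i _
          rw [abs_div, abs_pow, Nat.abs_cast]
      have hmul := (hasSum_realExp (y 0)).mul (hIH s) hsummable
      have hTsum : HasSum (fun p : ℕ × (Fin n → ℕ) => T (e p)) (Real.exp (y 0) *
          (E' * ∑' m : ℕ, F (s + m) * Y' ^ m / m.factorial)) := by
        rw [funext hTe0]
        exact hmul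
      have hT' := e.hasSum_iff.mp (show HasSum (T ∘ e) _ from hTsum)
      rw [filter_sum_succ w y 1, filter_sum_succ w y 0, if_pos hw0,
        if_neg (by rw [hw0]; exact zero_ne_one), Real.exp_add, zero_add, mul_assoc]
      exact hT'
    · -- case w 0 = 1
      have hyr : |y 0| + Yabs' ≤ r := by
        have h := hY
        rw [filter_sum_succ w (fun i => |y i|) 1, if_pos hw0] at h
        exact h
      have huv : |y 0| + |Y'| ≤ r := le_trans (by linarith [habsY']) hyr
      have hL0 := L0 F HF s huv
      have hG : ∀ σ : ℕ, Summable (fun m : ℕ => F (σ + m) * Y' ^ m / m.factorial) :=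
        fun σ => Gsummable F HF σ hY'r'
      have hrow : ∀ p1 : ℕ, HasSum (fun p2 : ℕ =>
          y 0 ^ p1 / p1.factorial * (Y' ^ p2 / p2.factorial) * F (s + p1 + p2))
          (y 0 ^ p1 / p1.factorial * ∑' m : ℕ, F ((s + p1) + m) * Y' ^ m / m.factorial) := by
        intro p1
        have h := ((hG (s + p1)).hasSum).mul_left (y 0 ^ p1 / p1.factorial)
        have hfun : (fun m : ℕ =>
            y 0 ^ p1 / p1.factorial * (F ((s + p1) + m) * Y' ^ m / m.factorial)) =
            fun p2 : ℕ => y 0 ^ p1 / p1.factorial * (Y' ^ p2 / p2.factorial) * F (s + p1 + p2) := by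
          funext m
          rw [add_assoc]
          ring
        rwa [hfun] at h
      have hrowsum := hL0.prod_fiberwise hrow
      have htop : HasSum (fun p1 : ℕ =>
          y 0 ^ p1 / p1.factorial * (E' * ∑' m : ℕ, F ((s + p1) + m) * Y' ^ m / m.factorial))
          (E' * ∑' M : ℕ, F (s + M) * (y 0 + Y') ^ M / M.factorial) := by
        have h := hrowsum.mul_left E'
        have hfun : (fun p1 : ℕ => E' * (y 0 ^ p1 / p1.factorial *
            ∑' m : ℕ, F ((s + p1) + m) * Y' ^ m / m.factorial)) = fun p1 : ℕ =>
            y 0 ^ p1 / p1.factorial * (E' * ∑' m : ℕ, F ((s + p1) + m) * Y' ^ m / m.factorial) := by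
          funext p1
          ring
        rwa [hfun] at h
      have hfiber : ∀ k0 : ℕ, HasSum (fun k' : Fin n → ℕ => T (e (k0, k')))
          (y 0 ^ k0 / k0.factorial *
            (E' * ∑' m : ℕ, F ((s + k0) + m) * Y' ^ m / m.factorial)) := by
        intro k0
        have h := (hIH (s + k0)).mul_left (y 0 ^ k0 / k0.factorial)
        have hfun : (fun k' : Fin n → ℕ => y 0 ^ k0 / k0.factorial *
            ((∏ i, (y i.succ ^ k' i / (k' i).factorial)) *
              F ((s + k0) + ∑ i, w i.succ * k' i))) = fun k' => T (e (k0, k')) := by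
          funext k'
          rw [hTe k0 k', hw0, one_mul, ← add_assoc]
        rwa [hfun] at h
      have habsfiber : ∀ k0 : ℕ, HasSum (fun k' : Fin n → ℕ => |T (e (k0, k'))|)
          (|y 0| ^ k0 / k0.factorial *
            (E'abs * ∑' m : ℕ, |F ((s + k0) + m)| * Yabs' ^ m / m.factorial)) := by
        intro k0
        have h := (hIHabs (s + k0)).mul_left (|y 0| ^ k0 / k0.factorial)
        have hfun : (fun k' : Fin n → ℕ => |y 0| ^ k0 / k0.factorial *
            ((∏ i, ((|y i.succ|) ^ k' i / (k' i).factorial)) *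
              |F ((s + k0) + ∑ i, w i.succ * k' i)|)) = fun k' => |T (e (k0, k'))| := by
          funext k'
          rw [hTabs k0 k', hw0, one_mul, ← add_assoc]
        rwa [hfun] at h
      -- absolute L0 and summability of rowsums
      have habsYabs : |(|y 0|)| + |Yabs'| ≤ r := by
        rw [abs_abs, abs_of_nonneg hYabs'0]
        exact hyr
      have habsL0 := L0 (fun m => |F m|) HFabs s habsYabs
      have hGabs : ∀ σ : ℕ, Summable (fun m : ℕ => |F (σ + m)| * Yabs' ^ m / m.factorial) :=
        fun σ => Gsummable (fun m => |F m|) HFabs σ (by rwa [abs_of_nonneg hYabs'0])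
      have habsrow : ∀ p1 : ℕ, HasSum (fun p2 : ℕ =>
          |y 0| ^ p1 / p1.factorial * (Yabs' ^ p2 / p2.factorial) * |F (s + p1 + p2)|)
          (|y 0| ^ p1 / p1.factorial *
            ∑' m : ℕ, |F ((s + p1) + m)| * Yabs' ^ m / m.factorial) := by
        intro p1
        have h := ((hGabs (s + p1)).hasSum).mul_left (|y 0| ^ p1 / p1.factorial)
        have hfun : (fun m : ℕ =>
            |y 0| ^ p1 / p1.factorial * (|F ((s + p1) + m)| * Yabs' ^ m / m.factorial)) =
            fun p2 : ℕ =>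
            |y 0| ^ p1 / p1.factorial * (Yabs' ^ p2 / p2.factorial) * |F (s + p1 + p2)| := by
          funext m
          rw [add_assoc]
          ring
        rwa [hfun] at h
      have habsrowsum := habsL0.prod_fiberwise habsrow
      have habstop := habsrowsum.mul_left E'abs
      -- summability of |T ∘ e|
      have hTabs_summable : Summable (fun p : ℕ × (Fin n → ℕ) => |T (e p)|) := by
        rw [summable_prod_of_nonneg (fun p => abs_nonneg _)]
        refine ⟨fun k0 => (habsfiber k0).summable, ?_⟩
        have h1 : (fun k0 : ℕ => ∑' k' : Fin n → ℕ, |T (e (k0, k'))|) =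
            fun k0 : ℕ => E'abs * (|y 0| ^ k0 / k0.factorial *
              ∑' m : ℕ, |F ((s + k0) + m)| * Yabs' ^ m / m.factorial) := by
          funext k0
          rw [(habsfiber k0).tsum_eq]
          ring
        rw [h1]
        exact habstop.summable
      have hTsummable : Summable (fun p : ℕ × (Fin n → ℕ) => T (e p)) := hTabs_summable.of_abs
      -- combine via the sigma machinery
      set e2 : (Σ _ : ℕ, (Fin n → ℕ)) ≃ ℕ × (Fin n → ℕ) := Equiv.sigmaEquivProd ℕ (Fin n → ℕ)
        with he2
      have hsig : HasSum (fun q : (Σ _ : ℕ, (Fin n → ℕ)) => T (e (q.1, q.2)))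
          (E' * ∑' M : ℕ, F (s + M) * (y 0 + Y') ^ M / M.factorial) := by
        apply HasSum.sigma_of_hasSum htop (fun k0 => hfiber k0)
        exact e2.summable_iff.mpr hTsummable
      have hTsum : HasSum (fun p : ℕ × (Fin n → ℕ) => T (e p))
          (E' * ∑' M : ℕ, F (s + M) * (y 0 + Y') ^ M / M.factorial) :=
        e2.hasSum_iff.mp (show HasSum ((fun p : ℕ × (Fin n → ℕ) => T (e p)) ∘ e2) _ from hsig)
      have hT' := e.hasSum_iff.mp (show HasSum (T ∘ e) _ from hTsum)
      rw [filter_sum_succ w y 1, filter_sum_succ w y 0, if_pos hw0,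
        if_neg (by rw [hw0]; exact one_ne_zero), zero_add]
      exact hT'



/-- The multi-index sum `P(t,z)` of Lemma A.1 in the case `c = 0`. -/
noncomputable def stmt9P (n : ℕ) (a b : Fin n → ℕ) (x : Fin n → ℝ) (t z : ℝ) : ℝ :=
  ∑' k : Fin n → ℕ,
    (∏ i, x i ^ k i) / (∏ i, (Nat.factorial (k i) : ℝ)) *
      t ^ (∑ i, a i * k i) * ∏ j ∈ Finset.range (∑ i, b i * k i), (z + t - j)

/-- in the case `c = 0`, `P(t,z)` factors as
`exp(Σ_{aᵢ=1} xᵢ·t + Σ_{aᵢ=bᵢ=0} xᵢ) · (1+Σ_{bᵢ=1} xᵢ)^{z+t}`, and consequently all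
second logarithmic derivatives of `P` vanish. -/
theorem stmt_9 (n : ℕ) (a b : Fin n → ℕ) (x : Fin n → ℝ)
    (hab : ∀ i, (a i, b i) = (0, 0) ∨ (a i, b i) = (1, 0) ∨ (a i, b i) = (0, 1))
    (hx : -1 < ∑ i ∈ univ.filter (fun i => b i = 1), x i)
    (hx' : ∑ i ∈ univ.filter (fun i => b i = 1), |x i| < 1) :
    (∀ t z : ℝ, stmt9P n a b x t z =
      Real.exp ((∑ i ∈ univ.filter (fun i => a i = 1), x i) * t +
          ∑ i ∈ univ.filter (fun i => a i = 0 ∧ b i = 0), x i) *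
        Real.exp ((z + t) *
          Real.log (1 + ∑ i ∈ univ.filter (fun i => b i = 1), x i))) ∧
    (∀ t z : ℝ,
      deriv (fun s => deriv (fun s' => Real.log (stmt9P n a b x s' z)) s) t = 0) ∧
    (∀ t z : ℝ,
      deriv (fun s => deriv (fun s' => Real.log (stmt9P n a b x t s')) s) z = 0) ∧
    (∀ t z : ℝ,
      deriv (fun s => deriv (fun s' => Real.log (stmt9P n a b x s s')) z) t = 0) := by
  have hab' : ∀ i, (a i = 0 ∧ b i = 0) ∨ (a i = 1 ∧ b i = 0) ∨ (a i = 0 ∧ b i = 1) := by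
    intro i
    rcases hab i with h | h | h
    · exact Or.inl ⟨congrArg Prod.fst h, congrArg Prod.snd h⟩
    · exact Or.inr (Or.inl ⟨congrArg Prod.fst h, congrArg Prod.snd h⟩)
    · exact Or.inr (Or.inr ⟨congrArg Prod.fst h, congrArg Prod.snd h⟩)
  set X : ℝ := ∑ i ∈ univ.filter (fun i => b i = 1), x i with hX
  set α : ℝ := ∑ i ∈ univ.filter (fun i => a i = 1), x i with hα
  set β : ℝ := ∑ i ∈ univ.filter (fun i => a i = 0 ∧ b i = 0), x i with hβ
  set L : ℝ := Real.log (1 + X) with hL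
  have habsX : |X| ≤ ∑ i ∈ univ.filter (fun i => b i = 1), |x i| :=
    Finset.abs_sum_le_sum_abs _ _
  have habsX1 : |X| < 1 := lt_of_le_of_lt habsX hx'
  -- Part 1
  have h1 : ∀ t z : ℝ, stmt9P n a b x t z = Real.exp (α * t + β) * Real.exp ((z + t) * L) := by
    intro t z
    set r : ℝ := max (∑ i ∈ univ.filter (fun i => b i = 1), |x i|) (1/2) with hr
    have hr0 : 0 < r := lt_of_lt_of_le (by norm_num) (le_max_right _ _)
    have hr1 : r < 1 := max_lt hx' (by norm_num)
    set F : ℕ → ℝ := fun M => ∏ j ∈ Finset.range M, (z + t - j) with hF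
    set C : ℝ := |z + t| + 1 with hC
    have HF : ∀ s : ℕ, Summable (fun m : ℕ => |F (s + m)| / m.factorial * r ^ m) := by
      intro s
      apply Summable.of_nonneg_of_le (fun m => by positivity) _
        (summable_aux C (by positivity) s hr0 hr1)
      intro m
      apply mul_le_mul_of_nonneg_right _ (by positivity)
      apply div_le_div_of_nonneg_right _ (by positivity)
      rw [hF]
      simp only
      rw [Finset.abs_prod]
      apply Finset.prod_le_prod (fun j _ => abs_nonneg _)
      intro j _
      calc |z + t - (j:ℝ)| ≤ |z + t| + |(j:ℝ)| := abs_sub _ _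
        _ = |z + t| + j := by rw [Nat.abs_cast]
        _ ≤ C + j := by rw [hC]; linarith
    set y : Fin n → ℝ := fun i => x i * t ^ a i with hy
    have hw : ∀ i, b i = 0 ∨ b i = 1 := by
      intro i
      rcases hab' i with h | h | h
      · exact Or.inl h.2
      · exact Or.inl h.2
      · exact Or.inr h.2
    have hyx : ∀ i, b i = 1 → y i = x i := by
      intro i hi
      have ha0 : a i = 0 := by
        rcases hab' i with h | h | h
        · exact h.1
        · rw [h.2] at hi; exact absurd hi zero_ne_one
        · exact h.1
      rw [hy]
      simp only
      rw [ha0, pow_zero, mul_one]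
    have hY : (∑ i ∈ univ.filter (fun i => b i = 1), |y i|) ≤ r := by
      have : (∑ i ∈ univ.filter (fun i => b i = 1), |y i|) =
          ∑ i ∈ univ.filter (fun i => b i = 1), |x i| := by
        apply Finset.sum_congr rfl
        intro i hi
        rw [hyx i (Finset.mem_filter.mp hi).2]
      rw [this]
      exact le_max_left _ _
    have hkey := keyM n F HF y b hw hY 0
    -- identify the summand
    have hterm : ∀ k : Fin n → ℕ,
        (∏ i, (y i ^ k i / (k i).factorial)) * F (0 + ∑ i, b i * k i) =
        (∏ i, x i ^ k i) / (∏ i, (Nat.factorial (k i) : ℝ)) *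
          t ^ (∑ i, a i * k i) * ∏ j ∈ Finset.range (∑ i, b i * k i), (z + t - j) := by
      intro k
      rw [hF, hy]
      simp only [zero_add]
      congr 1
      rw [Finset.prod_div_distrib, div_mul_eq_mul_div]
      congr 1
      rw [← Finset.prod_pow_eq_pow_sum, ← Finset.prod_mul_distrib]
      apply Finset.prod_congr rfl
      intro i _
      rw [mul_pow, pow_mul]
    rw [funext hterm] at hkey
    -- identify the value
    have hYval : (∑ i ∈ univ.filter (fun i => b i = 1), y i) = X := by
      rw [hX]
      apply Finset.sum_congr rfl
      intro i hi
      rw [hyx i (Finset.mem_filter.mp hi).2]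
    have hEval : (∑ i ∈ univ.filter (fun i => b i = 0), y i) = α * t + β := by
      rw [hα, hβ, hy]
      simp only
      rw [Finset.sum_mul, Finset.sum_filter, Finset.sum_filter, Finset.sum_filter,
        ← Finset.sum_add_distrib]
      apply Finset.sum_congr rfl
      intro i _
      rcases hab' i with h | h | h
      · rw [h.1, h.2]
        norm_num
      · rw [h.1, h.2]
        norm_num
      · rw [h.1, h.2]
        norm_num
    have hbin : (∑' m : ℕ, F (0 + m) * X ^ m / m.factorial) = Real.exp ((z + t) * L) := by
      have hgb := genBinomial (z + t) habsX1
      rw [← hgb.tsum_eq]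
      apply tsum_congr
      intro M
      rw [hF]
      simp only [zero_add]
      ring
    rw [hYval, hEval, hbin] at hkey
    rw [stmt9P]
    exact hkey.tsum_eq
  refine ⟨h1, ?_, ?_, ?_⟩
  · intro t z
    have hlog : ∀ s' : ℝ, Real.log (stmt9P n a b x s' z) = α * s' + β + (z + s') * L := by
      intro s'
      rw [h1 s' z, Real.log_mul (Real.exp_ne_zero _) (Real.exp_ne_zero _), Real.log_exp,
        Real.log_exp]
    have hd : ∀ s : ℝ, deriv (fun s' => Real.log (stmt9P n a b x s' z)) s = α + L := by
      intro s
      rw [funext hlog]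
      have h1' : HasDerivAt (fun s' : ℝ => α * s' + β + (z + s') * L) (α + L) s := by
        have ha : HasDerivAt (fun s' : ℝ => α * s' + β) α s := by
          simpa using ((hasDerivAt_id s).const_mul α).add_const β
        have hb : HasDerivAt (fun s' : ℝ => (z + s') * L) L s := by
          simpa using ((hasDerivAt_id s).const_add z).mul_const L
        exact ha.add hb
      exact h1'.deriv
    rw [funext hd]
    simp
  · intro t z
    have hlog : ∀ s' : ℝ, Real.log (stmt9P n a b x t s') = α * t + β + (s' + t) * L := by
      intro s'
      rw [h1 t s', Real.log_mul (Real.exp_ne_zero _) (Real.exp_ne_zero _), Real.log_exp,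
        Real.log_exp]
    have hd : ∀ s : ℝ, deriv (fun s' => Real.log (stmt9P n a b x t s')) s = L := by
      intro s
      rw [funext hlog]
      have h1' : HasDerivAt (fun s' : ℝ => α * t + β + (s' + t) * L) L s := by
        have hb : HasDerivAt (fun s' : ℝ => (s' + t) * L) L s := by
          simpa using ((hasDerivAt_id s).add_const t).mul_const L
        simpa using (hb.const_add (α * t + β))
      exact h1'.deriv
    rw [funext hd]
    simp
  · intro t z
    have hd : ∀ s : ℝ, deriv (fun s' => Real.log (stmt9P n a b x s s')) z = L := by
      intro s
      have hlog : ∀ s' : ℝ, Real.log (stmt9P n a b x s s') = α * s + β + (s' + s) * L := by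
        intro s'
        rw [h1 s s', Real.log_mul (Real.exp_ne_zero _) (Real.exp_ne_zero _), Real.log_exp,
          Real.log_exp]
      rw [funext hlog]
      have h1' : HasDerivAt (fun s' : ℝ => α * s + β + (s' + s) * L) L z := by
        have hb : HasDerivAt (fun s' : ℝ => (s' + s) * L) L z := by
          simpa using ((hasDerivAt_id z).add_const s).mul_const L
        simpa using (hb.const_add (α * s + β))
      exact h1'.deriv
    rw [funext hd]
    simp
end

section
/- Let P ∈ R[[t]] be a formal power series over a commutative ℚ-algebra R with constant term 1, and suppose P·P'' = (P')² (formal derivative). Then P = exp(c·t) := Σ_{n≥0} cⁿtⁿ/n! where c ∈ R is the linear coefficient of P. -/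
open PowerSeries

/-- a formal power series `P` over a commutative `ℚ`-algebra with
constant term `1` and `P·P'' = (P')²` equals `exp(c·t) = Σ cⁿtⁿ/n!`, where `c` is
its linear coefficient (`rescale c exp` is the series `Σ cⁿ Xⁿ/n!`). -/
theorem stmt_18 (R : Type*) [CommRing R] [Algebra ℚ R] (P : R⟦X⟧)
    (hP0 : constantCoeff P = 1)
    (hode : P * d⁄dX R (d⁄dX R P) = (d⁄dX R P) ^ 2) :
    P = rescale (coeff 1 P) (PowerSeries.exp R) := by
  set c := coeff 1 P with hc
  have hunit : IsUnit P := by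
    rw [PowerSeries.isUnit_iff_constantCoeff, hP0]; exact isUnit_one
  obtain ⟨u, hu⟩ := hunit
  have huinv : (↑u⁻¹ : R⟦X⟧) * P = 1 := by rw [← hu]; exact u.inv_mul
  set Q : R⟦X⟧ := d⁄dX R P * ↑u⁻¹ with hQ
  have hdQ : d⁄dX R Q = 0 := by
    have key : d⁄dX R Q = (↑u⁻¹ : R⟦X⟧) ^ 2 * (P * d⁄dX R (d⁄dX R P) - (d⁄dX R P) ^ 2) := by
      rw [hQ, Derivation.leibniz, PowerSeries.derivative_inv, hu, smul_eq_mul, smul_eq_mul]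
      linear_combination (-(↑u⁻¹ : R⟦X⟧) * d⁄dX R (d⁄dX R P)) * huinv
    rw [key, hode, sub_self, mul_zero]
  have h2 : constantCoeff (↑u⁻¹ : R⟦X⟧) = 1 := by
    have h := congrArg (constantCoeff) huinv
    rw [map_mul, hP0, mul_one, map_one] at h; exact h
  have h1 : constantCoeff (d⁄dX R P) = c := by
    rw [← coeff_zero_eq_constantCoeff_apply, PowerSeries.coeff_derivative]
    simp [hc]
  have hQc : Q = C c := by
    ext n
    cases n with
    | zero =>
      rw [coeff_zero_C, coeff_zero_eq_constantCoeff_apply, hQ, map_mul, h1, h2, mul_one]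
    | succ n =>
      have h0 : coeff n (d⁄dX R Q) = 0 := by rw [hdQ, map_zero]
      rw [PowerSeries.coeff_derivative] at h0
      have hinv : IsUnit ((n : R) + 1) := by
        have heq : ((n : R) + 1) = algebraMap ℚ R ((n : ℚ) + 1) := by push_cast; simp
        rw [heq]
        exact IsUnit.map (algebraMap ℚ R).toMonoidHom (isUnit_iff_ne_zero.2 (by positivity))
      have hz : coeff (n+1) Q = 0 := by
        refine hinv.mul_left_cancel ?_
        rw [mul_zero, mul_comm]; exact h0
      rw [hz, coeff_C]; simp
  have hP' : d⁄dX R P = C c * P := by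
    calc d⁄dX R P = d⁄dX R P * ((↑u⁻¹ : R⟦X⟧) * P) := by rw [huinv, mul_one]
    _ = Q * P := by rw [hQ]; ring
    _ = C c * P := by rw [hQc]
  have hrec : ∀ n : ℕ, coeff (n+1) P * ((n : R) + 1) = c * coeff n P := by
    intro n
    rw [← PowerSeries.coeff_derivative, hP', coeff_C_mul]
  ext n
  induction n with
  | zero =>
    rw [coeff_zero_eq_constantCoeff_apply, hP0, coeff_rescale, coeff_exp]
    simp
  | succ n ih =>
    rw [coeff_rescale, coeff_exp] at ih ⊢
    have hfac : algebraMap ℚ R (1 / ((n+1).factorial : ℚ)) =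
        algebraMap ℚ R (1/(n.factorial : ℚ)) * algebraMap ℚ R (1/((n:ℚ)+1)) := by
      rw [← map_mul]
      congr 1
      rw [Nat.factorial_succ]
      push_cast
      field_simp
    have hinv : ((n : R) + 1) * algebraMap ℚ R (1/((n:ℚ)+1)) = 1 := by
      have heq : ((n : R) + 1) = algebraMap ℚ R ((n : ℚ) + 1) := by push_cast; simp
      rw [heq, ← map_mul, mul_one_div, div_self (by positivity), map_one]
    have hstep := hrec n
    rw [ih] at hstep
    calc coeff (n+1) P
        = coeff (n+1) P * (((n : R) + 1) * algebraMap ℚ R (1/((n:ℚ)+1))) := by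
          rw [hinv, mul_one]
    _ = (coeff (n+1) P * ((n:R)+1)) * algebraMap ℚ R (1/((n:ℚ)+1)) := by ring
    _ = c * (c ^ n * algebraMap ℚ R (1/(n.factorial : ℚ))) * algebraMap ℚ R (1/((n:ℚ)+1)) := by rw [hstep]
    _ = c ^ (n+1) * algebraMap ℚ R (1/((n+1).factorial : ℚ)) := by rw [hfac]; ring
end
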